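/- Let c > 0, let N, B ≥ 1 be integers, let T = N·B, and let d ≥ N. For t ∈ {1,…,T} let k(t) := ⌈t/B⌉ ∈ {1,…,N}, and define F_t : ℝ^d → ℝ by F_t(x) := 2c·σ([x]_{k(t)}), where σ(z) := 1/(1 + e^{−z}) and [x]_i denotes the i-th coordinate of x. (These functions arise as F_t(x) = f_t(x, y*_t(x)) for the bilevel problem with upper-level f_t(x,y) = cσ([y]_{k(t)}) + cσ([x]_{k(t)}) and inner level g(x,y) = (μ_g/2)‖y − x‖², whose unique inner minimizer is y*(x) = x.) Then: (i) Σ_{t=2}^T sup_{x∈ℝ^d} |F_t(x) − F_{t−1}(x)| ≤ 2c(N−1); and (ii) for every sequence x_1,…,x_T in ℝ^d such that for each k ∈ {1,…,N} the k-th coordinate of x_{(k−1)B+1} is zero, one has Σ_{t=1}^T ‖∇F_t(x_t)‖² ≥ N c²/4. -/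

import Mathlib

/-- The sigmoid function `σ(z) = 1/(1 + e^{-z})`. -/
noncomputable def sigmoid (z : ℝ) : ℝ := 1 / (1 + Real.exp (-z))

lemma sigmoid_mem (z : ℝ) : 0 < sigmoid z ∧ sigmoid z < 1 := by
  have h1 : 0 < Real.exp (-z) := Real.exp_pos _
  constructor
  · exact div_pos one_pos (by linarith)
  · rw [sigmoid, div_lt_one (by linarith)]; linarith

lemma hasDerivAt_sigmoid_zero : HasDerivAt sigmoid (1/4) 0 := by
  have hneg : HasDerivAt (fun z : ℝ => -z) (-1) 0 := (hasDerivAt_id 0).neg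
  have h2 : HasDerivAt (fun z : ℝ => Real.exp (-z)) (Real.exp (-0) * (-1)) 0 :=
    (Real.hasDerivAt_exp (-0)).comp 0 hneg
  have h3 : HasDerivAt (fun z : ℝ => 1 + Real.exp (-z)) (Real.exp (-0) * (-1)) 0 :=
    h2.const_add 1
  have hne : (1 : ℝ) + Real.exp (-0) ≠ 0 := by positivity
  have h4 := h3.inv hne
  have : -(Real.exp (-0) * (-1)) / (1 + Real.exp (-0))^2 = 1/4 := by
    norm_num [Real.exp_zero]
  rw [this] at h4
  have hs : sigmoid = (fun z : ℝ => 1 + Real.exp (-z))⁻¹ := by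
    funext z; simp only [sigmoid, one_div, Pi.inv_apply]
  rw [hs]; exact h4

lemma grad_lemma (c : ℝ) (hc : 0 < c) {d : ℕ} (i : Fin d) (x : EuclideanSpace ℝ (Fin d))
    (hx : x i = 0) :
    c^2/4 ≤ ‖gradient (fun y : EuclideanSpace ℝ (Fin d) => 2*c*sigmoid (y i)) x‖^2 := by
  have h1 : HasDerivAt (fun z => 2*c*sigmoid z) (2*c*(1/4)) (x i) := by
    rw [hx]; exact hasDerivAt_sigmoid_zero.const_mul (2*c)
  have hproj : HasFDerivAt (fun y : EuclideanSpace ℝ (Fin d) => y i)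
      (EuclideanSpace.proj i : EuclideanSpace ℝ (Fin d) →L[ℝ] ℝ) x :=
    (EuclideanSpace.proj i : EuclideanSpace ℝ (Fin d) →L[ℝ] ℝ).hasFDerivAt
  have hFd : HasFDerivAt (fun y : EuclideanSpace ℝ (Fin d) => 2*c*sigmoid (y i))
      ((2*c*(1/4)) • (EuclideanSpace.proj i : EuclideanSpace ℝ (Fin d) →L[ℝ] ℝ)) x :=
    HasDerivAt.comp_hasFDerivAt (h₂ := fun z => 2*c*sigmoid z)
      (f := fun y : EuclideanSpace ℝ (Fin d) => y i) x h1 hproj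
  set L := (2*c*(1/4)) • (EuclideanSpace.proj i : EuclideanSpace ℝ (Fin d) →L[ℝ] ℝ) with hL
  have hnorm : ‖gradient (fun y : EuclideanSpace ℝ (Fin d) => 2*c*sigmoid (y i)) x‖ = ‖L‖ := by
    unfold gradient
    rw [hFd.fderiv]
    exact (InnerProductSpace.toDual ℝ (EuclideanSpace ℝ (Fin d))).symm.norm_map L
  have hv : ‖EuclideanSpace.single i (1:ℝ)‖ = 1 := by
    rw [EuclideanSpace.norm_single]; norm_num
  have hLv : L (EuclideanSpace.single i (1:ℝ)) = c/2 := by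
    have : (EuclideanSpace.proj i : EuclideanSpace ℝ (Fin d) →L[ℝ] ℝ)
        (EuclideanSpace.single i (1:ℝ)) = 1 := by
      show EuclideanSpace.single i (1:ℝ) i = 1
      simp [EuclideanSpace.single_apply]
    rw [hL]
    simp only [ContinuousLinearMap.smul_apply, this, smul_eq_mul]
    ring
  have hge : c/2 ≤ ‖L‖ := by
    have h := L.le_opNorm (EuclideanSpace.single i (1:ℝ))
    rw [hv, mul_one, hLv] at h
    calc c/2 ≤ |c/2| := le_abs_self _
    _ = ‖(c/2 : ℝ)‖ := rfl
    _ ≤ ‖L‖ := h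
  rw [hnorm]
  nlinarith [hge, norm_nonneg L]


/-- Lower-bound construction for the standard bilevel local regret: with `T = N·B`,
block index `k(t) = ⌈t/B⌉` (so that the `k(t)`-th coordinate has 0-based index
`(t−1)/B`, recorded by `κ`), and `F_t(x) = 2c·σ([x]_{k(t)})`, one has
(i) `Σ_{t=2}^T sup_x |F_t(x) − F_{t−1}(x)| ≤ 2c(N−1)`, and
(ii) for any iterates whose relevant coordinate vanishes at the start of each block,
`Σ_{t=1}^T ‖∇F_t(x_t)‖² ≥ N c²/4`. -/
theorem standard_regret_lower_bound_construction
    (c : ℝ) (hc : 0 < c) (N B d : ℕ) (hN : 1 ≤ N) (hB : 1 ≤ B)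
    (T : ℕ) (hT : T = N * B) (hd : N ≤ d)
    (κ : ℕ → Fin d) (hκ : ∀ t ∈ Finset.Icc 1 T, (κ t : ℕ) = (t - 1) / B)
    (F : ℕ → EuclideanSpace ℝ (Fin d) → ℝ)
    (hF : ∀ t ∈ Finset.Icc 1 T, ∀ x : EuclideanSpace ℝ (Fin d),
      F t x = 2 * c * sigmoid (x (κ t))) :
    (∑ t ∈ Finset.Icc 2 T, ⨆ x : EuclideanSpace ℝ (Fin d), |F t x - F (t - 1) x|) ≤
        2 * c * ((N : ℝ) - 1) ∧
    ∀ x : ℕ → EuclideanSpace ℝ (Fin d),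
      (∀ k ∈ Finset.Icc 1 N, x ((k - 1) * B + 1) (κ ((k - 1) * B + 1)) = 0) →
      (N : ℝ) * c ^ 2 / 4 ≤ ∑ t ∈ Finset.Icc 1 T, ‖gradient (F t) (x t)‖ ^ 2 := by
  have hB0 : 0 < B := hB
  constructor
  · -- part (i)
    set S : Finset ℕ := (Finset.Icc 1 (N-1)).image (fun k => k*B+1) with hS
    set g : ℕ → ℝ := fun t => ⨆ x : EuclideanSpace ℝ (Fin d), |F t x - F (t-1) x| with hg
    have hmem : ∀ t ∈ Finset.Icc 2 T, t ∈ Finset.Icc 1 T ∧ t - 1 ∈ Finset.Icc 1 T := by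
      intro t ht
      rw [Finset.mem_Icc] at ht ⊢
      refine ⟨⟨by omega, ht.2⟩, ?_⟩
      rw [Finset.mem_Icc]; omega
    have hzero : ∀ t ∈ Finset.Icc 2 T, t ∉ S → g t = 0 := by
      intro t ht htS
      obtain ⟨ht1, ht2⟩ := hmem t ht
      rw [Finset.mem_Icc] at ht
      have hndvd : ¬ B ∣ (t - 1) := by
        intro hdvd
        obtain ⟨k, hk⟩ := hdvd
        have hk' : t - 1 = k * B := by rw [hk, Nat.mul_comm]
        have hk1 : 1 ≤ k := by
          rcases Nat.eq_zero_or_pos k with h | h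
          · subst h; omega
          · exact h
        have hk2 : k ≤ N - 1 := by
          by_contra hcon
          push_neg at hcon
          have hNk : N ≤ k := by omega
          have : N * B ≤ k * B := Nat.mul_le_mul_right B hNk
          omega
        apply htS
        rw [hS, Finset.mem_image]
        exact ⟨k, Finset.mem_Icc.mpr ⟨hk1, hk2⟩, by omega⟩
      have hdiv : (t - 1) / B = (t - 2) / B := by
        have h2 : t - 1 = (t - 2) + 1 := by omega
        rw [h2, Nat.succ_div, if_neg (by rw [← h2]; exact hndvd), Nat.add_zero]
      have hκeq : κ t = κ (t - 1) := by
        have e1 := hκ t ht1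
        have e2 := hκ (t-1) ht2
        have e3 : (t - 1) - 1 = t - 2 := by omega
        rw [e3] at e2
        exact Fin.ext (by rw [e1, e2, hdiv])
      have hz : ∀ x : EuclideanSpace ℝ (Fin d), |F t x - F (t-1) x| = 0 := by
        intro x
        rw [hF t ht1 x, hF (t-1) ht2 x, hκeq]
        simp
      apply le_antisymm
      · exact Real.iSup_le (fun x => (hz x).le) le_rfl
      · exact Real.iSup_nonneg (fun x => abs_nonneg _)
    have hbound : ∀ t ∈ Finset.Icc 2 T, g t ≤ 2 * c := by
      intro t ht
      obtain ⟨ht1, ht2⟩ := hmem t ht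
      apply Real.iSup_le _ (by linarith)
      intro x
      rw [hF t ht1 x, hF (t-1) ht2 x]
      obtain ⟨ha1, ha2⟩ := sigmoid_mem (x (κ t))
      obtain ⟨hb1, hb2⟩ := sigmoid_mem (x (κ (t-1)))
      rw [abs_le]
      constructor <;> nlinarith
    have hsub : ∑ t ∈ Finset.Icc 2 T, g t
        = ∑ t ∈ (Finset.Icc 2 T).filter (· ∈ S), g t := by
      refine (Finset.sum_subset (Finset.filter_subset _ _) ?_).symm
      intro t ht htf
      apply hzero t ht
      intro htS
      exact htf (Finset.mem_filter.mpr ⟨ht, htS⟩)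
    rw [hsub]
    have hcard : ((Finset.Icc 2 T).filter (· ∈ S)).card ≤ N - 1 := by
      calc ((Finset.Icc 2 T).filter (· ∈ S)).card
          ≤ S.card := Finset.card_le_card (fun t ht => (Finset.mem_filter.mp ht).2)
        _ ≤ (Finset.Icc 1 (N-1)).card := Finset.card_image_le
        _ = N - 1 := by rw [Nat.card_Icc]; omega
    calc ∑ t ∈ (Finset.Icc 2 T).filter (· ∈ S), g t
        ≤ ∑ t ∈ (Finset.Icc 2 T).filter (· ∈ S), (2*c) :=
          Finset.sum_le_sum (fun t ht => hbound t (Finset.mem_filter.mp ht).1)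
      _ = (((Finset.Icc 2 T).filter (· ∈ S)).card : ℝ) * (2*c) := by
          rw [Finset.sum_const, nsmul_eq_mul]
      _ ≤ ((N - 1 : ℕ) : ℝ) * (2*c) := by
          apply mul_le_mul_of_nonneg_right _ (by linarith)
          exact_mod_cast hcard
      _ = 2 * c * ((N : ℝ) - 1) := by
          rw [Nat.cast_sub hN]; push_cast; ring
  · -- part (ii)
    intro x hx
    set φ : ℕ → ℕ := fun k => (k-1)*B + 1 with hφ
    have hφT : ∀ k ∈ Finset.Icc 1 N, φ k ∈ Finset.Icc 1 T := by
      intro k hk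
      rw [Finset.mem_Icc] at hk ⊢
      have h1 : (k-1)*B ≤ (N-1)*B := Nat.mul_le_mul_right B (by omega)
      obtain ⟨m, rfl⟩ : ∃ m, N = m + 1 := ⟨N - 1, by omega⟩
      have h2 : (m+1-1)*B + B = (m+1)*B := by
        rw [Nat.add_sub_cancel, Nat.succ_mul]
      simp only [hφ]
      omega
    have key : ∀ k ∈ Finset.Icc 1 N,
        c^2/4 ≤ ‖gradient (F (φ k)) (x (φ k))‖^2 := by
      intro k hk
      have htk := hφT k hk
      have hFeq : F (φ k) = fun y : EuclideanSpace ℝ (Fin d) =>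
          2*c*sigmoid (y (κ (φ k))) := funext (fun y => hF (φ k) htk y)
      rw [hFeq]
      exact grad_lemma c hc (κ (φ k)) (x (φ k)) (hx k hk)
    have hinj : Set.InjOn φ (Finset.Icc 1 N) := by
      intro a ha b hb hab
      rw [Finset.coe_Icc, Set.mem_Icc] at ha hb
      rw [hφ] at hab
      simp only at hab
      have : (a-1)*B = (b-1)*B := by omega
      have := Nat.eq_of_mul_eq_mul_right hB0 this
      omega
    calc (N : ℝ) * c ^ 2 / 4 = ∑ _k ∈ Finset.Icc 1 N, c^2/4 := by
          rw [Finset.sum_const, Nat.card_Icc, Nat.add_sub_cancel, nsmul_eq_mul]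
          ring
      _ ≤ ∑ k ∈ Finset.Icc 1 N, ‖gradient (F (φ k)) (x (φ k))‖^2 :=
          Finset.sum_le_sum key
      _ = ∑ t ∈ (Finset.Icc 1 N).image φ, ‖gradient (F t) (x t)‖^2 :=
          (Finset.sum_image (f := fun t => ‖gradient (F t) (x t)‖^2)
            (fun a ha b hb h => hinj ha hb h)).symm
      _ ≤ ∑ t ∈ Finset.Icc 1 T, ‖gradient (F t) (x t)‖^2 := by
          apply Finset.sum_le_sum_of_subset_of_nonneg
          · intro t ht
            rw [Finset.mem_image] at ht
            obtain ⟨k, hk, rfl⟩ := ht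
            exact hφT k hk
          · intro t _ _
            positivity
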